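/- If all positions k within the block of C containing the minimum of C[ℓ..r] satisfy C[k] ≥ i (where [ℓ..r] ⊆ [i..j] is block-aligned and all elements of S[i..ℓ−1] with C-value < i have been reported), then every element occurring in S[ℓ..r] already occurs in S[i..ℓ−1]. -/
import Mathlib


/-- Suppose `[ℓ..r] ⊆ [i..j]` is a block-aligned subinterval (blocks of length `g`),
`kmin` is a position of the minimum of `C` over `[ℓ..r]`, lying in block `p`, and all
positions `k` of block `p` satisfy `C[k] ≥ i`.  Then every element occurring in
`S[ℓ..r]` already occurs in `S[i..ℓ-1]`. -/
theorem stop_condition_sound {A : Type*} (n : ℕ) (S : ℕ → A) (C : ℕ → ℕ)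
    (hC : ∀ k, 1 ≤ k → k ≤ n →
      ((C k = 0 ∧ ∀ k', 1 ≤ k' → k' < k → S k' ≠ S k) ∨
       (1 ≤ C k ∧ C k < k ∧ S (C k) = S k ∧ ∀ k', C k < k' → k' < k → S k' ≠ S k)))
    (g : ℕ) (hg : 1 ≤ g)
    (i j ℓ r : ℕ) (h1i : 1 ≤ i) (hiℓ : i ≤ ℓ) (hℓr : ℓ ≤ r) (hrj : r ≤ j) (hjn : j ≤ n)
    (pℓ pr : ℕ) (hℓ : ℓ = (pℓ - 1) * g + 1) (hr : r = pr * g)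
    (kmin : ℕ) (hkmin : kmin ∈ Finset.Icc ℓ r)
    (hmin : ∀ k ∈ Finset.Icc ℓ r, C kmin ≤ C k)
    (p : ℕ) (hkblk : kmin ∈ Finset.Icc ((p - 1) * g + 1) (p * g))
    (hblk : ∀ k ∈ Finset.Icc ((p - 1) * g + 1) (p * g), i ≤ C k) :
    ∀ k ∈ Finset.Icc ℓ r, ∃ k', i ≤ k' ∧ k' ≤ ℓ - 1 ∧ S k' = S k := by
  have hiCk : ∀ k ∈ Finset.Icc ℓ r, i ≤ C k := fun k hk =>
    le_trans (hblk kmin hkblk) (hmin k hk)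
  intro k
  induction k using Nat.strong_induction_on with
  | _ k ih =>
    intro hk
    have hk' := Finset.mem_Icc.mp hk
    have h1k : 1 ≤ k := by omega
    have hkn : k ≤ n := by omega
    have hCk : i ≤ C k := hiCk k hk
    rcases hC k h1k hkn with ⟨h0, _⟩ | ⟨_, hlt, heq, _⟩
    · omega
    · by_cases hcase : C k ≤ ℓ - 1
      · exact ⟨C k, hCk, hcase, heq⟩
      · have hmem : C k ∈ Finset.Icc ℓ r := Finset.mem_Icc.mpr ⟨by omega, by omega⟩
        obtain ⟨k', h1, h2, h3⟩ := ih (C k) hlt hmem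
        exact ⟨k', h1, h2, h3.trans heq⟩
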